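/- If X ⊆ ∏_{j<ω} Z_j, where each Z_j is a compact Hausdorff space with no weird subspace, then X is not weird. -/

import Mathlib

/-- A space is scattered iff every nonempty subset has a point isolated in it. -/
def ScatteredSpace (X : Type*) [TopologicalSpace X] : Prop :=
  ∀ S : Set X, S.Nonempty → ∃ x ∈ S, ∃ U : Set X, IsOpen U ∧ U ∩ S = {x}

/-- A space is weird iff it is compact Hausdorff, not scattered, and no subset
is simultaneously perfect (closed, nonempty, no isolated points) and totally
disconnected. -/
def Weird (X : Type*) [TopologicalSpace X] : Prop :=
  CompactSpace X ∧ T2Space X ∧ ¬ ScatteredSpace X ∧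
    ∀ P : Set X, Perfect P → P.Nonempty → ¬ IsTotallyDisconnected P

open Set Filter Topology

section Aux

variable {α : Type*} {β : Type*} [TopologicalSpace α] [TopologicalSpace β]

lemma td_mono {S T : Set α} (h : IsTotallyDisconnected T) (hST : S ⊆ T) :
    IsTotallyDisconnected S := fun t hts hp => h t (hts.trans hST) hp

lemma td_subsingleton {S : Set α} (h : S.Subsingleton) : IsTotallyDisconnected S :=
  fun t hts _ => h.anti hts

/-- Zorn argument: a minimal compact set mapping onto a preperfect set is preperfect. -/
lemma exists_preperfect_preimage [T2Space α] [T2Space β] {f : α → β} (hf : Continuous f)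
    {K : Set α} (hKcl : IsClosed K) (hK : IsCompact K) {T : Set β} (hT : Preperfect T)
    (hTcl : IsClosed T) (hTne : T.Nonempty) (hTK : T ⊆ f '' K) :
    ∃ L, L ⊆ K ∧ IsCompact L ∧ IsClosed L ∧ Preperfect L ∧ L.Nonempty ∧ f '' L ⊆ T := by
  classical
  set S : Set (Set α) := {L | L ⊆ K ∩ f ⁻¹' T ∧ IsClosed L ∧ T ⊆ f '' L} with hS
  have hmemS : ∀ L ∈ S, IsCompact L := fun L hL =>
    hK.of_isClosed_subset hL.2.1 (hL.1.trans inter_subset_left)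
  have hx : K ∩ f ⁻¹' T ∈ S := by
    refine ⟨Subset.rfl, hKcl.inter (hTcl.preimage hf), ?_⟩
    intro t ht
    obtain ⟨x, hxK, hfx⟩ := hTK ht
    exact ⟨x, ⟨hxK, by simp [mem_preimage, hfx, ht]⟩, hfx⟩
  have hzorn := zorn_superset_nonempty S ?chain _ hx
  case chain =>
    intro c hcS hchain hcne
    refine ⟨⋂₀ c, ⟨?_, ?_, ?_⟩, fun s hs => sInter_subset_of_mem hs⟩
    · obtain ⟨L₀, hL₀⟩ := hcne
      exact (sInter_subset_of_mem hL₀).trans (hcS hL₀).1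
    · exact isClosed_sInter fun L hL => (hcS hL).2.1
    · intro t ht
      have := hcne
      haveI : Nonempty c := hcne.to_subtype
      have hne : (⋂ L : c, ((L : Set α) ∩ f ⁻¹' {t})).Nonempty := by
        apply IsCompact.nonempty_iInter_of_directed_nonempty_isCompact_isClosed
        · intro L L'
          rcases hchain.total L.2 L'.2 with h | h
          · exact ⟨L, Subset.rfl, inter_subset_inter_left _ h⟩
          · exact ⟨L', inter_subset_inter_left _ h, Subset.rfl⟩
        · intro L
          obtain ⟨x, hxL, hfx⟩ := (hcS L.2).2.2 ht
          exact ⟨x, hxL, by simpa [mem_preimage] using hfx⟩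
        · intro L
          exact (hmemS _ (hcS L.2)).inter_right (isClosed_singleton.preimage hf)
        · intro L
          exact ((hcS L.2).2.1).inter (isClosed_singleton.preimage hf)
      obtain ⟨x, hx⟩ := hne
      simp only [mem_iInter, mem_inter_iff, mem_preimage, mem_singleton_iff] at hx
      refine ⟨x, ?_, (hx ⟨_, hcne.choose_spec⟩).2⟩
      rw [mem_sInter]
      intro L hL
      exact (hx ⟨L, hL⟩).1
  obtain ⟨m, -, hmS, hmmin⟩ := hzorn
  have hmK : m ⊆ K ∩ f ⁻¹' T := hmS.1
  have hmcl : IsClosed m := hmS.2.1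
  have hmT : T ⊆ f '' m := hmS.2.2
  have hmcomp : IsCompact m := hmemS _ hmS
  refine ⟨m, hmK.trans inter_subset_left, hmcomp, hmcl, ?_, ?_, ?_⟩
  · -- preperfect
    intro x hxm
    by_contra hacc
    rw [accPt_iff_nhds] at hacc
    push_neg at hacc
    obtain ⟨U, hU, hUm⟩ := hacc
    have hUm' : ∀ y ∈ U ∩ m, y = x := fun y hy => hUm y hy
    set m' := m \ {x} with hm'
    have hm'eq : m' = m ∩ (interior U)ᶜ := by
      apply Subset.antisymm
      · rintro y ⟨hym, hyx⟩
        refine ⟨hym, fun hyU => hyx ?_⟩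
        exact hUm' y ⟨interior_subset hyU, hym⟩
      · rintro y ⟨hym, hyU⟩
        exact ⟨hym, fun h => hyU (by rw [h] at *; exact mem_interior_iff_mem_nhds.2 hU)⟩
    have hm'cl : IsClosed m' := hm'eq ▸ hmcl.inter isOpen_interior.isClosed_compl
    have hm'notS : m' ∉ S := by
      intro hm'S
      have := hmmin hm'S (diff_subset)
      exact (this hxm).2 rfl
    have hm'T : ¬ T ⊆ f '' m' := fun h => hm'notS ⟨diff_subset.trans hmK, hm'cl, h⟩
    obtain ⟨t, htT, htm'⟩ := not_subset.1 hm'T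
    have hfx : f x = t := by
      obtain ⟨y, hym, hfy⟩ := hmT htT
      rcases eq_or_ne y x with rfl | hyx
      · exact hfy
      · exact absurd ⟨y, ⟨hym, hyx⟩, hfy⟩ htm'
    have hm'img : IsClosed (f '' m') :=
      ((hmcomp.of_isClosed_subset hm'cl diff_subset).image hf).isClosed
    have hW : (f '' m')ᶜ ∈ 𝓝 t := hm'img.isOpen_compl.mem_nhds htm'
    obtain ⟨t', ⟨ht'W, ht'T⟩, ht'ne⟩ := accPt_iff_nhds.1 (hT t htT) _ hW
    obtain ⟨y, hym, hfy⟩ := hmT ht'T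
    rcases eq_or_ne y x with rfl | hyx
    · exact ht'ne (hfy ▸ hfx ▸ rfl)
    · exact ht'W ⟨y, ⟨hym, hyx⟩, hfy⟩
  · obtain ⟨t, ht⟩ := hTne
    obtain ⟨y, hym, -⟩ := hmT ht
    exact ⟨y, hym⟩
  · exact image_subset_iff.2 (hmK.trans inter_subset_right)

/-- Main step: inside a perfect compact set we find a perfect subset whose image
under `f` is totally disconnected, provided the target has no weird subspaces. -/
lemma step_lemma [T2Space α] [T2Space β] {f : α → β} (hf : Continuous f)
    (hβ : ∀ S : Set β, ¬ Weird S)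
    {Q : Set α} (hQ : Perfect Q) (hQc : IsCompact Q) (hne : Q.Nonempty) :
    ∃ R, R ⊆ Q ∧ Perfect R ∧ R.Nonempty ∧ IsTotallyDisconnected (f '' R) := by
  classical
  set Y : Set β := f '' Q with hY
  have hYc : IsCompact Y := hQc.image hf
  haveI : CompactSpace ↥Y := isCompact_iff_compactSpace.mp hYc
  have hw : ¬(¬ ScatteredSpace ↥Y ∧
      ∀ P : Set ↥Y, Perfect P → P.Nonempty → ¬ IsTotallyDisconnected P) :=
    fun h => hβ Y ⟨inferInstance, inferInstance, h.1, h.2⟩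
  by_cases hsc : ScatteredSpace ↥Y
  · -- the image is scattered: take the fibre over an isolated point of Y
    have hYne : (univ : Set ↥Y).Nonempty := by
      obtain ⟨x, hx⟩ := hne
      exact ⟨⟨f x, mem_image_of_mem f hx⟩, trivial⟩
    obtain ⟨x', -, U', hU'open, hU'⟩ := hsc univ hYne
    rw [inter_univ] at hU'
    rw [isOpen_induced_iff] at hU'open
    obtain ⟨U, hUopen, hUeq⟩ := hU'open
    set z : β := (x' : β) with hz
    refine ⟨Q ∩ f ⁻¹' {z}, inter_subset_left, ⟨?_, ?_⟩, ?_, ?_⟩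
    · exact hQ.closed.inter (isClosed_singleton.preimage hf)
    · -- preperfect
      have hkey : f ⁻¹' U ∩ Q ⊆ Q ∩ f ⁻¹' {z} := by
        rintro y ⟨hyU, hyQ⟩
        have : (⟨f y, mem_image_of_mem f hyQ⟩ : ↥Y) ∈ U' := by
          rw [← hUeq]; exact hyU
        rw [hU'] at this
        exact ⟨hyQ, by simpa [mem_preimage] using congrArg Subtype.val this⟩
      intro x hx
      have hxU : x ∈ f ⁻¹' U := by
        have hx'U : x' ∈ U' := by rw [hU']; rfl
        rw [← hUeq] at hx'U
        have : f x = z := hx.2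
        simpa [mem_preimage, this] using hx'U
      have hacc := (hQ.acc x hx.1).nhds_inter (hUopen.preimage hf |>.mem_nhds hxU)
      exact hacc.mono (principal_mono.mpr hkey)
    · -- nonempty
      obtain ⟨x₀, hx₀Q, hfx₀⟩ := x'.2
      exact ⟨x₀, hx₀Q, by simp [mem_preimage, hfx₀, hz]⟩
    · exact td_mono (td_subsingleton subsingleton_singleton)
        (image_subset_iff.2 inter_subset_right)
  · -- the image is not scattered: it has a perfect totally disconnected subset
    have hD : ¬ ∀ P : Set ↥Y, Perfect P → P.Nonempty → ¬ IsTotallyDisconnected P :=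
      fun h => hw ⟨hsc, h⟩
    push_neg at hD
    obtain ⟨P, hP, hPne, hPtd⟩ := hD
    set T : Set β := Subtype.val '' P with hT
    have hPcomp : IsCompact P := hP.closed.isCompact
    have hTcl : IsClosed T := (hPcomp.image continuous_subtype_val).isClosed
    have hTne : T.Nonempty := hPne.image _
    have hTY : T ⊆ f '' Q := by rintro _ ⟨y', -, rfl⟩; exact y'.2
    have hTpre : Preperfect T := by
      rintro _ ⟨x', hx'P, rfl⟩
      rw [accPt_iff_nhds]
      intro U hU
      have hU' : Subtype.val ⁻¹' U ∈ 𝓝 x' :=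
        continuous_subtype_val.continuousAt.preimage_mem_nhds hU
      obtain ⟨y', ⟨hy'U, hy'P⟩, hy'ne⟩ := accPt_iff_nhds.1 (hP.acc x' hx'P) _ hU'
      exact ⟨y', ⟨hy'U, mem_image_of_mem _ hy'P⟩, Subtype.coe_injective.ne hy'ne⟩
    have hTtd : IsTotallyDisconnected T := by
      intro t hts hpre
      have htsub : t ⊆ range (Subtype.val : ↥Y → β) :=
        hts.trans ((image_subset_range _ _))
      have heq : Subtype.val '' (Subtype.val ⁻¹' t) = t :=
        image_preimage_eq_of_subset htsub
      have hpre' : IsPreconnected ((Subtype.val : ↥Y → β) ⁻¹' t) := by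
        rw [← Topology.IsInducing.subtypeVal.isPreconnected_image
          (s := (Subtype.val : ↥Y → β) ⁻¹' t), heq]
        exact hpre
      have hsubP : (Subtype.val : ↥Y → β) ⁻¹' t ⊆ P := by
        intro y hy
        have : (y : β) ∈ T := hts hy
        obtain ⟨y', hy'P, hy'eq⟩ := this
        rwa [Subtype.coe_injective hy'eq] at hy'P
      have := hPtd _ hsubP hpre'
      rw [← heq]
      exact this.image _
    obtain ⟨L, hLK, hLcomp, hLcl, hLpre, hLne, hLT⟩ :=
      exists_preperfect_preimage hf hQ.closed hQc hTpre hTcl hTne hTY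
    exact ⟨L, hLK, ⟨hLcl, hLpre⟩, hLne, td_mono hTtd hLT⟩

/-- Step with splitting: two disjoint perfect children with totally disconnected image. -/
lemma step_pair [T25Space α] [T2Space β] {f : α → β} (hf : Continuous f)
    (hβ : ∀ S : Set β, ¬ Weird S)
    {Q : Set α} (hQ : Perfect Q) (hQc : IsCompact Q) (hne : Q.Nonempty) :
    ∃ p : Set α × Set α, p.1 ⊆ Q ∧ p.2 ⊆ Q ∧ Perfect p.1 ∧ p.1.Nonempty ∧
      Perfect p.2 ∧ p.2.Nonempty ∧ Disjoint p.1 p.2 ∧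
      IsTotallyDisconnected (f '' p.1) ∧ IsTotallyDisconnected (f '' p.2) := by
  obtain ⟨R, hRQ, hR, hRne, hRtd⟩ := step_lemma hf hβ hQ hQc hne
  obtain ⟨C₀, C₁, ⟨hC₀, hC₀ne, hC₀R⟩, ⟨hC₁, hC₁ne, hC₁R⟩, hdisj⟩ := hR.splitting hRne
  exact ⟨(C₀, C₁), hC₀R.trans hRQ, hC₁R.trans hRQ, hC₀, hC₀ne, hC₁, hC₁ne, hdisj,
    td_mono hRtd (image_mono (f := f) hC₀R), td_mono hRtd (image_mono (f := f) hC₁R)⟩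


end Aux

section Scheme

variable (Z : ℕ → Type*) [∀ j, TopologicalSpace (Z j)]
    [∀ j, CompactSpace (Z j)] [∀ j, T2Space (Z j)]

open Classical in
/-- The pair of children of a perfect set: disjoint perfect subsets whose `n`-th
coordinate projections are totally disconnected. -/
noncomputable def childPair (hZ : ∀ j, ∀ S : Set (Z j), ¬ Weird S) (n : ℕ)
    (Q : Set (∀ j, Z j)) : Set (∀ j, Z j) × Set (∀ j, Z j) :=
  if h : Perfect Q ∧ Q.Nonempty then
    (step_pair (continuous_apply n) (hZ n) h.1 h.1.closed.isCompact h.2).choose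
  else (∅, ∅)

lemma childPair_spec (hZ : ∀ j, ∀ S : Set (Z j), ¬ Weird S) {n : ℕ}
    {Q : Set (∀ j, Z j)} (hQ : Perfect Q) (hne : Q.Nonempty) :
    (childPair Z hZ n Q).1 ⊆ Q ∧ (childPair Z hZ n Q).2 ⊆ Q ∧
    Perfect (childPair Z hZ n Q).1 ∧ (childPair Z hZ n Q).1.Nonempty ∧
    Perfect (childPair Z hZ n Q).2 ∧ (childPair Z hZ n Q).2.Nonempty ∧
    Disjoint (childPair Z hZ n Q).1 (childPair Z hZ n Q).2 ∧
    IsTotallyDisconnected ((fun x => x n) '' (childPair Z hZ n Q).1) ∧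
    IsTotallyDisconnected ((fun x => x n) '' (childPair Z hZ n Q).2) := by
  rw [childPair, dif_pos ⟨hQ, hne⟩]
  exact (step_pair (continuous_apply n) (hZ n) hQ hQ.closed.isCompact hne).choose_spec

/-- The Cantor scheme of perfect sets: `scheme (b :: s)` is a child of `scheme s`. -/
noncomputable def scheme (hZ : ∀ j, ∀ S : Set (Z j), ¬ Weird S)
    (P0 : Set (∀ j, Z j)) : List Bool → Set (∀ j, Z j)
  | [] => P0
  | b :: s => if b then (childPair Z hZ s.length (scheme hZ P0 s)).2
      else (childPair Z hZ s.length (scheme hZ P0 s)).1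

variable (hZ : ∀ j, ∀ S : Set (Z j), ¬ Weird S) {P0 : Set (∀ j, Z j)}

lemma scheme_perfect (hP0 : Perfect P0) (hP0ne : P0.Nonempty) (s : List Bool) :
    Perfect (scheme Z hZ P0 s) ∧ (scheme Z hZ P0 s).Nonempty := by
  induction s with
  | nil => exact ⟨hP0, hP0ne⟩
  | cons b s ih =>
    obtain ⟨hp, hne⟩ := ih
    obtain ⟨-, -, h1, h2, h3, h4, -, -, -⟩ := childPair_spec Z hZ hp hne
    cases b
    · exact ⟨h1, h2⟩
    · exact ⟨h3, h4⟩

lemma scheme_cons_subset (hP0 : Perfect P0) (hP0ne : P0.Nonempty) (b : Bool) (s : List Bool) :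
    scheme Z hZ P0 (b :: s) ⊆ scheme Z hZ P0 s := by
  obtain ⟨hp, hne⟩ := scheme_perfect Z hZ hP0 hP0ne s
  obtain ⟨h1, h2, -⟩ := childPair_spec Z hZ hp hne
  cases b
  · exact h1
  · exact h2

lemma scheme_td (hP0 : Perfect P0) (hP0ne : P0.Nonempty) (b : Bool) (s : List Bool) :
    IsTotallyDisconnected ((fun x => x s.length) '' scheme Z hZ P0 (b :: s)) := by
  obtain ⟨hp, hne⟩ := scheme_perfect Z hZ hP0 hP0ne s
  obtain ⟨-, -, -, -, -, -, -, h1, h2⟩ := childPair_spec Z hZ hp hne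
  cases b
  · exact h1
  · exact h2

lemma scheme_disjoint_cons (hP0 : Perfect P0) (hP0ne : P0.Nonempty) (s : List Bool) :
    Disjoint (scheme Z hZ P0 (false :: s)) (scheme Z hZ P0 (true :: s)) := by
  obtain ⟨hp, hne⟩ := scheme_perfect Z hZ hP0 hP0ne s
  obtain ⟨-, -, -, -, -, -, h, -, -⟩ := childPair_spec Z hZ hp hne
  exact h

lemma scheme_append_subset (hP0 : Perfect P0) (hP0ne : P0.Nonempty) (u s : List Bool) :
    scheme Z hZ P0 (u ++ s) ⊆ scheme Z hZ P0 s := by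
  induction u with
  | nil => simp [Subset.rfl]
  | cons b u ih =>
    have h1 : scheme Z hZ P0 (b :: (u ++ s)) ⊆ scheme Z hZ P0 (u ++ s) :=
      scheme_cons_subset Z hZ hP0 hP0ne b (u ++ s)
    exact h1.trans ih

lemma scheme_disjoint (hP0 : Perfect P0) (hP0ne : P0.Nonempty) :
    ∀ (s t : List Bool), s.length = t.length → s ≠ t →
    Disjoint (scheme Z hZ P0 s) (scheme Z hZ P0 t)
  | [], [], _, hne => absurd rfl hne
  | [], b :: t, hlen, _ => by simp at hlen
  | a :: s, [], hlen, _ => by simp at hlen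
  | a :: s, b :: t, hlen, hne => by
    simp only [List.length_cons, Nat.add_right_cancel_iff] at hlen
    by_cases hst : s = t
    · subst hst
      have hd := scheme_disjoint_cons Z hZ hP0 hP0ne s
      cases a <;> cases b
      · exact absurd rfl hne
      · exact hd
      · exact hd.symm
      · exact absurd rfl hne
    · exact (scheme_disjoint hP0 hP0ne s t hlen hst).mono
        (scheme_cons_subset Z hZ hP0 hP0ne a s) (scheme_cons_subset Z hZ hP0 hP0ne b t)

lemma scheme_subset_P0 (hP0 : Perfect P0) (hP0ne : P0.Nonempty) (s : List Bool) :
    scheme Z hZ P0 s ⊆ P0 := by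
  have := scheme_append_subset Z hZ hP0 hP0ne s []
  rwa [List.append_nil] at this

end Scheme


theorem stmt8 (Z : ℕ → Type*) [∀ j, TopologicalSpace (Z j)]
    [∀ j, CompactSpace (Z j)] [∀ j, T2Space (Z j)]
    (hZ : ∀ j, ∀ S : Set (Z j), ¬ Weird S)
    (X : Set (∀ j, Z j)) : ¬ Weird X := by
  classical
  rintro ⟨hXc, hXt2, hXnsc, hXnoP⟩
  have hXcomp : IsCompact X := isCompact_iff_compactSpace.mpr hXc
  have hXclosed : IsClosed X := hXcomp.isClosed
  -- Step 1: a nonempty perfect subset `P0` of `X`.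
  rw [ScatteredSpace] at hXnsc
  push_neg at hXnsc
  obtain ⟨S, hSne, hS⟩ := hXnsc
  set S₀ : Set (∀ j, Z j) := Subtype.val '' S with hS₀
  have hS₀X : S₀ ⊆ X := by rintro _ ⟨y, -, rfl⟩; exact y.2
  have hS₀pre : Preperfect S₀ := by
    rintro _ ⟨x', hx'S, rfl⟩
    rw [accPt_iff_nhds]
    intro U hU
    obtain ⟨V, hVU, hVopen, hxV⟩ := mem_nhds_iff.1 hU
    have hopen : IsOpen ((Subtype.val : ↥X → _) ⁻¹' V) := hVopen.preimage continuous_subtype_val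
    have hne := hS x' hx'S _ hopen
    have hx'mem : x' ∈ (Subtype.val : ↥X → _) ⁻¹' V ∩ S := ⟨hxV, hx'S⟩
    have hex : ∃ y' ∈ (Subtype.val : ↥X → _) ⁻¹' V ∩ S, y' ≠ x' := by
      by_contra h
      push_neg at h
      exact hne (Set.eq_singleton_iff_unique_mem.2 ⟨hx'mem, fun y hy => h y hy⟩)
    obtain ⟨y', ⟨hy'V, hy'S⟩, hy'ne⟩ := hex
    exact ⟨y', ⟨hVU hy'V, mem_image_of_mem _ hy'S⟩, Subtype.coe_injective.ne hy'ne⟩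
  set P0 := closure S₀ with hP0def
  have hP0 : Perfect P0 := hS₀pre.perfect_closure
  have hP0ne : P0.Nonempty := (hSne.image _).closure
  have hP0X : P0 ⊆ X := closure_minimal hS₀X hXclosed
  -- Step 2: Zorn's lemma, minimal closed set meeting every set of the scheme.
  set F : Set (Set (∀ j, Z j)) :=
    {L | L ⊆ P0 ∧ IsClosed L ∧ ∀ s : List Bool, (L ∩ scheme Z hZ P0 s).Nonempty} with hF
  have hstart : P0 ∈ F := ⟨Subset.rfl, hP0.closed, fun s =>
    ((scheme_perfect Z hZ hP0 hP0ne s).2).imp fun x hx =>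
      ⟨scheme_subset_P0 Z hZ hP0 hP0ne s hx, hx⟩⟩
  have hchain : ∀ c ⊆ F, IsChain (· ⊆ ·) c → c.Nonempty →
      ∃ lb ∈ F, ∀ s ∈ c, lb ⊆ s := by
    intro c hcF hchain hcne
    haveI : Nonempty c := hcne.to_subtype
    refine ⟨⋂₀ c, ⟨?_, isClosed_sInter fun L hL => (hcF hL).2.1, ?_⟩,
      fun s hs => sInter_subset_of_mem hs⟩
    · obtain ⟨L₀, hL₀⟩ := hcne
      exact (sInter_subset_of_mem hL₀).trans (hcF hL₀).1
    · intro s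
      have hne : (⋂ L : c, ((L : Set (∀ j, Z j)) ∩ scheme Z hZ P0 s)).Nonempty := by
        apply IsCompact.nonempty_iInter_of_directed_nonempty_isCompact_isClosed
        · intro L L'
          rcases hchain.total L.2 L'.2 with h | h
          · exact ⟨L, Subset.rfl, inter_subset_inter_left _ h⟩
          · exact ⟨L', inter_subset_inter_left _ h, Subset.rfl⟩
        · exact fun L => (hcF L.2).2.2 s
        · exact fun L => ((hcF L.2).2.1.inter
            (scheme_perfect Z hZ hP0 hP0ne s).1.closed).isCompact
        · exact fun L => (hcF L.2).2.1.inter (scheme_perfect Z hZ hP0 hP0ne s).1.closed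
      obtain ⟨x, hx⟩ := hne
      simp only [mem_iInter, mem_inter_iff] at hx
      exact ⟨x, mem_sInter.2 fun L hL => (hx ⟨L, hL⟩).1, (hx ⟨_, hcne.choose_spec⟩).2⟩
  obtain ⟨m, -, hmm⟩ := zorn_superset_nonempty F hchain _ hstart
  have hmem : m ∈ F := hmm.1
  have hmP0 : m ⊆ P0 := hmem.1
  have hmcl : IsClosed m := hmem.2.1
  have hmint : ∀ s, (m ∩ scheme Z hZ P0 s).Nonempty := hmem.2.2
  have hmne : m.Nonempty := (hmint []).imp fun x hx => hx.1
  -- m is inside every level of the scheme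
  have hlevel : ∀ n : ℕ, m ⊆ ⋃ s ∈ {s : List Bool | s.length = n}, scheme Z hZ P0 s := by
    intro n
    set U := ⋃ s ∈ {s : List Bool | s.length = n}, scheme Z hZ P0 s with hU
    have hUcl : IsClosed U :=
      (List.finite_length_eq Bool n).isClosed_biUnion
        fun s _ => (scheme_perfect Z hZ hP0 hP0ne s).1.closed
    have hm' : m ∩ U ∈ F := by
      refine ⟨inter_subset_left.trans hmP0, hmcl.inter hUcl, ?_⟩
      intro t
      rcases le_or_gt t.length n with hle | hlt
      · set s := List.replicate (n - t.length) false ++ t with hs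
        have hslen : s ∈ {s : List Bool | s.length = n} := by
          simp [hs, Nat.sub_add_cancel hle]
        obtain ⟨x, hxm, hxs⟩ := hmint s
        exact ⟨x, ⟨hxm, mem_biUnion hslen hxs⟩, scheme_append_subset Z hZ hP0 hP0ne _ t hxs⟩
      · set u := t.drop (t.length - n) with hu
        have hulen : u ∈ {s : List Bool | s.length = n} := by
          simp only [mem_setOf_eq, hu, List.length_drop]
          omega
        have hsub : scheme Z hZ P0 t ⊆ scheme Z hZ P0 u := by
          have := scheme_append_subset Z hZ hP0 hP0ne (t.take (t.length - n)) u
          rwa [hu, List.take_append_drop] at this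
        obtain ⟨x, hxm, hxt⟩ := hmint t
        exact ⟨x, ⟨hxm, mem_biUnion hulen (hsub hxt)⟩, hxt⟩
    have := hmm.2 hm' inter_subset_left
    exact fun x hx => (this hx).2
  -- m has no isolated points
  have hmpre : Preperfect m := by
    intro x hxm
    by_contra hacc
    rw [accPt_iff_nhds] at hacc
    push_neg at hacc
    obtain ⟨U, hU, hUm⟩ := hacc
    set m' := m \ {x} with hm'
    have hm'eq : m' = m ∩ (interior U)ᶜ := by
      apply Subset.antisymm
      · rintro y ⟨hym, hyx⟩
        refine ⟨hym, fun hyU => hyx ?_⟩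
        exact hUm y ⟨interior_subset hyU, hym⟩
      · rintro y ⟨hym, hyU⟩
        refine ⟨hym, fun h => hyU ?_⟩
        rw [mem_singleton_iff] at h
        subst h
        exact mem_interior_iff_mem_nhds.2 hU
    have hm'cl : IsClosed m' := hm'eq ▸ hmcl.inter isOpen_interior.isClosed_compl
    have hm'notF : m' ∉ F := by
      intro hm'F
      exact (hmm.2 hm'F diff_subset hxm).2 rfl
    have hexs : ∃ s : List Bool, m' ∩ scheme Z hZ P0 s = ∅ := by
      by_contra h
      push_neg at h
      exact hm'notF ⟨diff_subset.trans hmP0, hm'cl, fun s => h s⟩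
    obtain ⟨s, hs⟩ := hexs
    have hsub : m ∩ scheme Z hZ P0 s ⊆ {x} := by
      rintro y ⟨hym, hys⟩
      rw [mem_singleton_iff]
      by_contra hyx
      have hym' : y ∈ m' := ⟨hym, by simpa [mem_singleton_iff] using hyx⟩
      have hmem2 : y ∈ m' ∩ scheme Z hZ P0 s := ⟨hym', hys⟩
      rw [hs] at hmem2
      exact hmem2
    obtain ⟨y0, hy0⟩ := hmint (false :: s)
    obtain ⟨y1, hy1⟩ := hmint (true :: s)
    have h0 : y0 = x := hsub ⟨hy0.1, scheme_cons_subset Z hZ hP0 hP0ne false s hy0.2⟩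
    have h1 : y1 = x := hsub ⟨hy1.1, scheme_cons_subset Z hZ hP0 hP0ne true s hy1.2⟩
    exact (scheme_disjoint_cons Z hZ hP0 hP0ne s).ne_of_mem hy0.2 hy1.2 (h0.trans h1.symm)
  -- m is totally disconnected
  have hmtd : IsTotallyDisconnected m := by
    intro t hts hpre x hx y hy
    funext n
    obtain ⟨s₀, hs₀len, hxs₀⟩ : ∃ s₀ : List Bool, s₀.length = n + 1 ∧
        x ∈ scheme Z hZ P0 s₀ := by
      have := hlevel (n + 1) (hts hx)
      simp only [mem_iUnion, exists_prop, mem_setOf_eq] at this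
      exact this
    have hAcl : IsClosed (scheme Z hZ P0 s₀) := (scheme_perfect Z hZ hP0 hP0ne s₀).1.closed
    set B := ⋃ s ∈ {s : List Bool | s.length = n + 1 ∧ s ≠ s₀}, scheme Z hZ P0 s with hB
    have hBcl : IsClosed B :=
      ((List.finite_length_eq Bool (n+1)).subset fun s hs => hs.1).isClosed_biUnion
        fun s _ => (scheme_perfect Z hZ hP0 hP0ne s).1.closed
    have hAB : Disjoint (scheme Z hZ P0 s₀) B := by
      rw [hB]
      simp only [disjoint_iUnion_right]
      intro s hs
      exact scheme_disjoint Z hZ hP0 hP0ne s₀ s (hs₀len.trans hs.1.symm)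
        fun h => hs.2 h.symm
    obtain ⟨u, v, hu, hv, hAu, hBv, huv⟩ := normal_separation hAcl hBcl hAB
    have htuv : t ⊆ u ∪ v := by
      intro w hwt
      have := hlevel (n + 1) (hts hwt)
      simp only [mem_iUnion, exists_prop, mem_setOf_eq] at this
      obtain ⟨s, hslen, hws⟩ := this
      rcases eq_or_ne s s₀ with rfl | hne
      · exact Or.inl (hAu hws)
      · exact Or.inr (hBv (mem_biUnion ⟨hslen, hne⟩ hws))
    have htu : t ⊆ u := hpre.subset_left_of_subset_union hu hv huv htuv ⟨x, hx, hAu hxs₀⟩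
    have htA : t ⊆ scheme Z hZ P0 s₀ := by
      intro w hwt
      have := hlevel (n + 1) (hts hwt)
      simp only [mem_iUnion, exists_prop, mem_setOf_eq] at this
      obtain ⟨s, hslen, hws⟩ := this
      rcases eq_or_ne s s₀ with rfl | hne
      · exact hws
      · exact absurd (htu hwt) fun hyu =>
          (huv.ne_of_mem hyu (hBv (mem_biUnion ⟨hslen, hne⟩ hws))) rfl
    obtain ⟨b, s₁, rfl⟩ : ∃ b s₁, s₀ = b :: s₁ := by
      cases s₀ with
      | nil => simp at hs₀len
      | cons b s₁ => exact ⟨b, s₁, rfl⟩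
    have hs₁len : s₁.length = n := by simpa using hs₀len
    have htd := scheme_td Z hZ hP0 hP0ne b s₁
    rw [hs₁len] at htd
    have hss : ((fun z : (∀ j, Z j) => z n) '' t).Subsingleton :=
      htd _ (image_mono htA) (hpre.image _ (continuous_apply n).continuousOn)
    exact hss (mem_image_of_mem _ hx) (mem_image_of_mem _ hy)
  -- Step 3: transfer `m` to a perfect totally disconnected subset of the subtype `X`.
  have hmX : m ⊆ X := hmP0.trans hP0X
  set P' : Set ↥X := Subtype.val ⁻¹' m with hP'
  have hP'perf : Perfect P' := by
    constructor
    · exact hmcl.preimage continuous_subtype_val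
    · intro x' hx'
      rw [accPt_iff_nhds]
      intro U' hU'
      rw [nhds_subtype, mem_comap] at hU'
      obtain ⟨U, hU, hUsub⟩ := hU'
      obtain ⟨y, ⟨hyU, hym⟩, hyne⟩ := accPt_iff_nhds.1 (hmpre _ hx') U hU
      refine ⟨⟨y, hmX hym⟩, ⟨hUsub hyU, hym⟩, ?_⟩
      exact fun h => hyne (congrArg Subtype.val h)
  have hP'ne : P'.Nonempty := by
    obtain ⟨x, hx⟩ := hmne
    exact ⟨⟨x, hmX hx⟩, hx⟩
  have hP'td : IsTotallyDisconnected P' := by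
    intro t hts hpre
    have himg := hmtd (Subtype.val '' t) (by rintro _ ⟨w, hw, rfl⟩; exact hts hw)
      (hpre.image _ continuous_subtype_val.continuousOn)
    intro a ha b hb
    exact Subtype.coe_injective (himg (mem_image_of_mem _ ha) (mem_image_of_mem _ hb))
  exact hXnoP P' hP'perf hP'ne hP'td
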